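/- Let M be a positive integer, let J be a finite family of jobs, and let OPT be a subfamily of J of maximum cardinality among those forming an M-machine schedule. Assign each job of J independently and uniformly at random to one of M machines, and for each machine p let N_p denote the maximum cardinality of a pairwise disjoint subfamily of the jobs of J assigned to machine p. Then the expected value of N_1 + ... + N_M is at least |OPT| / (2 - 1/M) = M * |OPT| / (2M - 1). Consequently, solving a maximum independent set of intervals (exactly) on each machine after uniformly random job-to-machine assignment yields a (2 - 1/M)-approximation of optimal unweighted interval scheduling on M machines in expectation. -/

import Mathlib

/-- A finite family of jobs (intervals `[s, e]`, represented as pairs `(s, e)`)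
is pairwise disjoint. -/
def JobsDisjoint (F : Finset (ℝ × ℝ)) : Prop :=
  ∀ j ∈ F, ∀ j' ∈ F, j ≠ j' → Disjoint (Set.Icc j.1 j.2) (Set.Icc j'.1 j'.2)

/-- A finite family of jobs forms an `M`-machine schedule. -/
def IsMSchedule (M : ℕ) (F : Finset (ℝ × ℝ)) : Prop :=
  ∃ f : ℝ × ℝ → Fin M, ∀ j ∈ F, ∀ j' ∈ F, j ≠ j' → f j = f j' →
    Disjoint (Set.Icc j.1 j.2) (Set.Icc j'.1 j'.2)

open scoped Classical in
/-- The maximum cardinality of a pairwise disjoint subfamily of `F`. -/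
noncomputable def maxIS (F : Finset (ℝ × ℝ)) : ℕ :=
  (F.powerset.filter JobsDisjoint).sup Finset.card


open scoped Classical

noncomputable abbrev jkey (a : ℝ × ℝ) : ℝ ×ₗ ℝ := toLex (a.2, a.1)

lemma jkey_inj : Function.Injective jkey := by
  intro a b h
  have := congrArg ofLex h
  exact Prod.ext (congrArg Prod.snd this) (congrArg Prod.fst this)

open scoped Classical in
noncomputable def gsel (M : ℕ) (G : ℝ × ℝ → Fin M) (q : Fin M) : List (ℝ × ℝ) → List (ℝ × ℝ)
  | [] => []
  | a :: t =>
      let r := gsel M G q t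
      if G a = q ∧ ∀ s ∈ r, Disjoint (Set.Icc a.1 a.2) (Set.Icc s.1 s.2) then a :: r else r

lemma gsel_subset {M G q} : ∀ {l : List (ℝ × ℝ)} {x}, x ∈ gsel M G q l → x ∈ l := by
  intro l
  induction l with
  | nil => intro x h; simp [gsel] at h
  | cons a t ih =>
    intro x h
    simp only [gsel] at h
    split at h
    · rcases List.mem_cons.mp h with h | h
      · simp [h]
      · exact List.mem_cons_of_mem _ (ih h)
    · exact List.mem_cons_of_mem _ (ih h)

lemma gsel_machine {M G q} : ∀ {l : List (ℝ × ℝ)} {x}, x ∈ gsel M G q l → G x = q := by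
  intro l
  induction l with
  | nil => intro x h; simp [gsel] at h
  | cons a t ih =>
    intro x h
    simp only [gsel] at h
    split at h
    · rcases List.mem_cons.mp h with h | h
      · subst h; tauto
      · exact ih h
    · exact ih h

lemma gsel_disjoint {M G q} : ∀ {l : List (ℝ × ℝ)} {x y}, x ∈ gsel M G q l →
    y ∈ gsel M G q l → x ≠ y → Disjoint (Set.Icc x.1 x.2) (Set.Icc y.1 y.2) := by
  intro l
  induction l with
  | nil => intro x y h; simp [gsel] at h
  | cons a t ih =>
    intro x y hx hy hne
    simp only [gsel] at hx hy
    by_cases hc : G a = q ∧ ∀ s ∈ gsel M G q t, Disjoint (Set.Icc a.1 a.2) (Set.Icc s.1 s.2)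
    · rw [if_pos hc, List.mem_cons] at hx hy
      rcases hx with hx | hx <;> rcases hy with hy | hy
      · exact absurd (hx.trans hy.symm) hne
      · subst hx; exact hc.2 _ hy
      · subst hy; exact (hc.2 _ hx).symm
      · exact ih hx hy hne
    · rw [if_neg hc] at hx hy
      exact ih hx hy hne

lemma gsel_mono_cons {M G q} {a : ℝ × ℝ} {t : List (ℝ × ℝ)} {x} (h : x ∈ gsel M G q t) :
    x ∈ gsel M G q (a :: t) := by
  simp only [gsel]
  split
  · exact List.mem_cons_of_mem _ h
  · exact h

lemma gsel_mem_cons_of_ne {M G q} {a s : ℝ × ℝ} {t : List (ℝ × ℝ)} (h : s ≠ a) :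
    s ∈ gsel M G q (a :: t) ↔ s ∈ gsel M G q t := by
  constructor
  · intro hs
    simp only [gsel] at hs
    split at hs
    · rcases List.mem_cons.mp hs with h' | h'
      · exact absurd h' h
      · exact h'
    · exact hs
  · exact gsel_mono_cons

lemma gsel_congr {M q} {G G' : ℝ × ℝ → Fin M} : ∀ {l : List (ℝ × ℝ)},
    (∀ x ∈ l, G x = G' x) → gsel M G q l = gsel M G' q l := by
  intro l
  induction l with
  | nil => intro _; rfl
  | cons a t ih =>
    intro h
    have ht : gsel M G q t = gsel M G' q t := ih (fun x hx => h x (List.mem_cons_of_mem _ hx))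
    simp only [gsel, ht, h a List.mem_cons_self]

lemma gsel_reject {M G q} : ∀ {l : List (ℝ × ℝ)},
    l.Pairwise (fun a b => jkey b < jkey a) → ∀ {j}, j ∈ l → G j = q → j ∉ gsel M G q l →
    ∃ s ∈ gsel M G q l, jkey s < jkey j ∧ ¬ Disjoint (Set.Icc j.1 j.2) (Set.Icc s.1 s.2) := by
  intro l
  induction l with
  | nil => intro _ j h; simp at h
  | cons a t ih =>
    intro hp j hj hGj hrej
    rcases List.mem_cons.mp hj with rfl | hjt
    · by_cases hc : ∀ s ∈ gsel M G q t, Disjoint (Set.Icc j.1 j.2) (Set.Icc s.1 s.2)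
      · exfalso
        apply hrej
        simp only [gsel, if_pos (And.intro hGj hc)]
        exact List.mem_cons_self
      · push_neg at hc
        obtain ⟨s, hs, hnd⟩ := hc
        refine ⟨s, gsel_mono_cons hs, ?_, hnd⟩
        exact (List.pairwise_cons.mp hp).1 s (gsel_subset hs)
    · have hrej' : j ∉ gsel M G q t := fun h => hrej (gsel_mono_cons h)
      obtain ⟨s, hs, h1, h2⟩ := ih (List.pairwise_cons.mp hp).2 hjt hGj hrej'
      exact ⟨s, gsel_mono_cons hs, h1, h2⟩

lemma gsel_mem_filter {M G q} {s : ℝ × ℝ} : ∀ {l : List (ℝ × ℝ)},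
    l.Pairwise (fun a b => jkey b < jkey a) →
    (s ∈ gsel M G q l ↔ s ∈ gsel M G q (l.filter (fun x => decide (jkey x ≤ jkey s)))) := by
  intro l
  induction l with
  | nil => simp
  | cons a t ih =>
    intro hp
    have hpt := (List.pairwise_cons.mp hp).2
    by_cases ha : jkey a ≤ jkey s
    · have hft : t.filter (fun x => decide (jkey x ≤ jkey s)) = t := by
        apply List.filter_eq_self.mpr
        intro x hx
        exact decide_eq_true (le_of_lt (lt_of_lt_of_le ((List.pairwise_cons.mp hp).1 x hx) ha))
      have hfa : List.filter (fun x => decide (jkey x ≤ jkey s)) (a :: t) = a :: t := by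
        rw [List.filter_cons]
        simp [ha, hft]
      rw [hfa]
    · have hsa : s ≠ a := by rintro rfl; exact ha le_rfl
      have hfa : List.filter (fun x => decide (jkey x ≤ jkey s)) (a :: t)
          = List.filter (fun x => decide (jkey x ≤ jkey s)) t := by
        rw [List.filter_cons]
        simp [ha]
      rw [hfa, gsel_mem_cons_of_ne hsa]
      exact ih hpt

open scoped Classical in
lemma count_update {α : Type*} [Fintype α] [DecidableEq α] {M : ℕ} (j0 : α) (q : Fin M)
    (P : (α → Fin M) → Prop)
    (hP : ∀ g g' : α → Fin M, (∀ x, x ≠ j0 → g x = g' x) → (P g ↔ P g')) :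
    M * (Finset.univ.filter (fun g : α → Fin M => P g ∧ g j0 = q)).card
      = (Finset.univ.filter (fun g : α → Fin M => P g)).card := by
  have hfib : (Finset.univ.filter (fun g : α → Fin M => P g)).card
      = ∑ v : Fin M, ((Finset.univ.filter (fun g : α → Fin M => P g)).filter
          (fun g => g j0 = v)).card := by
    exact Finset.card_eq_sum_card_fiberwise (fun g _ => Finset.mem_univ (g j0))
  have hone : ∀ v : Fin M, ((Finset.univ.filter (fun g : α → Fin M => P g)).filter
      (fun g => g j0 = v)).card
      = (Finset.univ.filter (fun g : α → Fin M => P g ∧ g j0 = q)).card := by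
    intro v
    apply Finset.card_bij' (fun g _ => Function.update g j0 q)
      (fun g _ => Function.update g j0 v)
    · intro g hg
      simp only [Finset.mem_filter, Finset.mem_univ, true_and] at hg
      rw [Function.update_idem, ← hg.2, Function.update_eq_self]
    · intro g hg
      simp only [Finset.mem_filter, Finset.mem_univ, true_and] at hg
      rw [Function.update_idem, ← hg.2, Function.update_eq_self]
    · intro g hg
      simp only [Finset.mem_filter, Finset.mem_univ, true_and] at hg ⊢
      exact ⟨(hP _ g (fun x hx => Function.update_of_ne hx _ _)).mpr hg.1,
        Function.update_self _ _ _⟩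
    · intro g hg
      simp only [Finset.mem_filter, Finset.mem_univ, true_and] at hg ⊢
      exact ⟨(hP _ g (fun x hx => Function.update_of_ne hx _ _)).mpr hg.1,
        Function.update_self _ _ _⟩
  rw [hfib]
  simp only [hone]
  rw [Finset.sum_const, Finset.card_univ, Fintype.card_fin, smul_eq_mul]

lemma exists_sorted_list (S : Finset (ℝ × ℝ)) :
    ∃ L : List (ℝ × ℝ), (∀ x, x ∈ L ↔ x ∈ S) ∧
      L.Pairwise (fun a b => jkey b < jkey a) := by
  induction S using Finset.strongInduction with
  | _ S ih =>
    rcases S.eq_empty_or_nonempty with rfl | hne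
    · exact ⟨[], by simp, List.Pairwise.nil⟩
    · obtain ⟨a, ha, hmax⟩ := S.exists_max_image jkey hne
      obtain ⟨L, hL1, hL2⟩ := ih (S.erase a) (Finset.erase_ssubset ha)
      refine ⟨a :: L, ?_, ?_⟩
      · intro x
        simp only [List.mem_cons, hL1, Finset.mem_erase]
        constructor
        · rintro (rfl | ⟨_, h⟩) <;> [exact ha; exact h]
        · intro hx
          rcases eq_or_ne x a with rfl | h
          · exact Or.inl rfl
          · exact Or.inr ⟨h, hx⟩
      · refine List.pairwise_cons.mpr ⟨?_, hL2⟩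
        intro b hb
        have hb' := (hL1 b).mp hb
        have hbne : b ≠ a := (Finset.mem_erase.mp hb').1
        exact lt_of_le_of_ne (hmax b (Finset.mem_of_mem_erase hb'))
          (fun h => hbne (jkey_inj h))
open scoped Classical

noncomputable def Gfun (M : ℕ) (hM : 0 < M) (J : Finset (ℝ × ℝ)) (g : ↥J → Fin M)
    (x : ℝ × ℝ) : Fin M :=
  if h : x ∈ J then g ⟨x, h⟩ else ⟨0, hM⟩

noncomputable def Bset (OPT : Finset (ℝ × ℝ)) (s : ℝ × ℝ) : Finset (ℝ × ℝ) :=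
  OPT.filter (fun j => jkey s < jkey j ∧ s.2 ∈ Set.Icc j.1 j.2)
theorem stmt9 (M : ℕ) (hM : 0 < M) (J : Finset (ℝ × ℝ))
    (hjobs : ∀ j ∈ J, j.1 < j.2)
    (OPT : Finset (ℝ × ℝ)) (hOPTsub : OPT ⊆ J) (hOPTsched : IsMSchedule M OPT)
    (hOPTmax : ∀ T ⊆ J, IsMSchedule M T → T.card ≤ OPT.card) :
    (M : ℝ) * OPT.card / (2 * (M : ℝ) - 1) ≤
      (∑ g : (↥J → Fin M), ∑ p : Fin M,
        (maxIS ((J.attach.filter (fun j => g j = p)).image Subtype.val) : ℝ)) /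
        (M : ℝ) ^ J.card := by
  classical
  obtain ⟨f, hf⟩ := hOPTsched
  obtain ⟨L, hL, hLp⟩ := exists_sorted_list OPT
  set Gf : (↥J → Fin M) → ℝ × ℝ → Fin M := fun g => Gfun M hM J g with hGf
  set ss : (↥J → Fin M) → Fin M → Finset (ℝ × ℝ) :=
    fun g q => (gsel M (Gf g) q L).toFinset with hss
  -- selected sets sit inside the assigned jobs of OPT
  have h_sel_sub : ∀ g q, ss g q ⊆ OPT.filter (fun j => Gf g j = q) := by
    intro g q x hx
    rw [hss, List.mem_toFinset] at hx
    exact Finset.mem_filter.mpr ⟨(hL x).mp (gsel_subset hx), gsel_machine hx⟩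
  -- candidate blocker sets are small
  have h_B_card : ∀ s ∈ OPT, (Bset OPT s).card ≤ M - 1 := by
    intro s hs
    have hsIcc : s.2 ∈ Set.Icc s.1 s.2 :=
      Set.right_mem_Icc.mpr (le_of_lt (hjobs s (hOPTsub hs)))
    have hmaps : ∀ j ∈ Bset OPT s, f j ∈ Finset.univ.erase (f s) := by
      intro j hj
      rw [Bset, Finset.mem_filter] at hj
      obtain ⟨hjO, hkey, hmem⟩ := hj
      refine Finset.mem_erase.mpr ⟨?_, Finset.mem_univ _⟩
      intro hfe
      have hne : j ≠ s := fun h => lt_irrefl _ (h ▸ hkey)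
      exact Set.disjoint_left.mp (hf j hjO s hs hne hfe) hmem hsIcc
    have hinj : ∀ j ∈ Bset OPT s, ∀ j' ∈ Bset OPT s, f j = f j' → j = j' := by
      intro j hj j' hj' hfe
      by_contra hne
      rw [Bset, Finset.mem_filter] at hj hj'
      exact Set.disjoint_left.mp (hf j hj.1 j' hj'.1 hne hfe) hj.2.2 hj'.2.2
    calc (Bset OPT s).card ≤ (Finset.univ.erase (f s)).card :=
          Finset.card_le_card_of_injOn f hmaps hinj
      _ = M - 1 := by
          rw [Finset.card_erase_of_mem (Finset.mem_univ _), Finset.card_univ,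
            Fintype.card_fin]
  -- rejected jobs are covered by blocker sets of selected jobs
  have h_rej : ∀ g q, (OPT.filter (fun j => Gf g j = q) \ ss g q).card ≤
      ∑ s ∈ ss g q, ((Bset OPT s).filter (fun j => Gf g j = q)).card := by
    intro g q
    refine le_trans (Finset.card_le_card ?_) (Finset.card_biUnion_le)
    intro j hj
    rw [Finset.mem_sdiff, Finset.mem_filter] at hj
    obtain ⟨⟨hjO, hjq⟩, hjns⟩ := hj
    have hjL : j ∈ L := (hL j).mpr hjO
    have hjnsel : j ∉ gsel M (Gf g) q L := by
      rw [hss] at hjns; simpa [List.mem_toFinset] using hjns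
    obtain ⟨t, htsel, htk, htd⟩ := gsel_reject hLp hjL hjq hjnsel
    refine Finset.mem_biUnion.mpr ⟨t, by rw [hss]; exact List.mem_toFinset.mpr htsel, ?_⟩
    rw [Finset.mem_filter, Bset, Finset.mem_filter]
    refine ⟨⟨hjO, htk, ?_⟩, hjq⟩
    -- t.2 ∈ Icc j.1 j.2
    obtain ⟨x, hx1, hx2⟩ := Set.not_disjoint_iff.mp htd
    have ht2 : t.2 ≤ j.2 := by
      have := htk
      rcases Prod.lex_def.mp this with h | h
      · exact le_of_lt h
      · exact le_of_eq h.1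
    exact ⟨le_trans hx1.1 hx2.2, ht2⟩
  -- independence counting
  have h_count : ∀ (q : Fin M) (s : ℝ × ℝ), s ∈ OPT → ∀ j ∈ Bset OPT s,
      M * (Finset.univ.filter (fun g : ↥J → Fin M => s ∈ ss g q ∧ Gf g j = q)).card
        = (Finset.univ.filter (fun g : ↥J → Fin M => s ∈ ss g q)).card := by
    intro q s hs j hj
    rw [Bset, Finset.mem_filter] at hj
    obtain ⟨hjO, hkj, _⟩ := hj
    have hjJ : j ∈ J := hOPTsub hjO
    set j0 : ↥J := ⟨j, hjJ⟩ with hj0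
    have hGval : ∀ g : ↥J → Fin M, Gf g j = g j0 := by
      intro g
      simp only [hGf, Gfun, dif_pos hjJ]
      rfl
    have hinv : ∀ (g g' : ↥J → Fin M), (∀ x, x ≠ j0 → g x = g' x) →
        ((s ∈ ss g q) ↔ (s ∈ ss g' q)) := by
      intro g g' hgg
      have hcong : gsel M (Gf g) q
            (L.filter (fun x => decide (jkey x ≤ jkey s)))
          = gsel M (Gf g') q (L.filter (fun x => decide (jkey x ≤ jkey s))) := by
        apply gsel_congr
        intro x hx
        rw [List.mem_filter] at hx
        have hxle : jkey x ≤ jkey s := of_decide_eq_true hx.2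
        have hxne : x ≠ j := fun h => absurd hkj (not_lt.mpr (h ▸ hxle))
        simp only [hGf, Gfun]
        split
        · rename_i hxJ
          exact hgg _ (fun h => hxne (congrArg Subtype.val h))
        · rfl
      rw [hss]
      simp only [List.mem_toFinset]
      rw [gsel_mem_filter hLp, gsel_mem_filter hLp, hcong]
    simp only [hGval]
    have h := count_update j0 q (fun g => s ∈ ss g q) hinv
    convert h using 3
    ext g
    simp only [Finset.mem_filter]
  -- selected count bounded by maxIS
  have h_maxIS : ∀ (g : ↥J → Fin M) (q : Fin M),
      (ss g q).card ≤ maxIS ((J.attach.filter (fun j => g j = q)).image Subtype.val) := by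
    intro g q
    have hsub : ss g q ⊆ (J.attach.filter (fun j => g j = q)).image Subtype.val := by
      intro x hx
      have hx' := h_sel_sub g q hx
      rw [Finset.mem_filter] at hx'
      obtain ⟨hxO, hxq⟩ := hx'
      have hxJ : x ∈ J := hOPTsub hxO
      refine Finset.mem_image.mpr ⟨⟨x, hxJ⟩, ?_, rfl⟩
      rw [Finset.mem_filter]
      refine ⟨Finset.mem_attach _ _, ?_⟩
      rw [hGf] at hxq
      simpa only [Gfun, dif_pos hxJ] using hxq
    have hdisj : JobsDisjoint (ss g q) := by
      intro a ha b hb hne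
      rw [hss, List.mem_toFinset] at ha hb
      exact gsel_disjoint ha hb hne
    exact Finset.le_sup (Finset.mem_filter.mpr ⟨Finset.mem_powerset.mpr hsub, hdisj⟩)
  -- now the counting
  set A : ℕ := ∑ g : ↥J → Fin M, ∑ q : Fin M, (ss g q).card with hA
  set R : ℕ := ∑ g : ↥J → Fin M, ∑ q : Fin M,
    (OPT.filter (fun j => Gf g j = q) \ ss g q).card with hR
  have h_ss_sub : ∀ g q, ss g q ⊆ OPT := fun g q =>
    (h_sel_sub g q).trans (Finset.filter_subset _ _)
  have h_total : M ^ J.card * OPT.card ≤ A + R := by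
    have hfib : ∀ g : ↥J → Fin M,
        OPT.card = ∑ q : Fin M, (OPT.filter (fun j => Gf g j = q)).card := fun g =>
      Finset.card_eq_sum_card_fiberwise (fun x _ => Finset.mem_univ _)
    calc M ^ J.card * OPT.card = ∑ _g : ↥J → Fin M, OPT.card := by
          rw [Finset.sum_const, Finset.card_univ, Fintype.card_fun, Fintype.card_fin,
            Fintype.card_coe, smul_eq_mul]
      _ = ∑ g : ↥J → Fin M, ∑ q : Fin M, (OPT.filter (fun j => Gf g j = q)).card :=
          Finset.sum_congr rfl (fun g _ => hfib g)
      _ ≤ ∑ g : ↥J → Fin M, ∑ q : Fin M,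
            ((ss g q).card + (OPT.filter (fun j => Gf g j = q) \ ss g q).card) := by
          refine Finset.sum_le_sum (fun g _ => Finset.sum_le_sum (fun q _ => ?_))
          rw [add_comm]
          exact Finset.card_le_card_sdiff_add_card
      _ = A + R := by
          rw [hA, hR, ← Finset.sum_add_distrib]
          exact Finset.sum_congr rfl (fun g _ => Finset.sum_add_distrib)
  have hA' : A = ∑ q : Fin M, ∑ s ∈ OPT,
      (Finset.univ.filter (fun g : ↥J → Fin M => s ∈ ss g q)).card := by
    rw [hA, Finset.sum_comm]
    refine Finset.sum_congr rfl (fun q _ => ?_)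
    have hcard : ∀ g : ↥J → Fin M,
        (ss g q).card = ∑ s ∈ OPT, if s ∈ ss g q then 1 else 0 := by
      intro g
      rw [← Finset.sum_filter]
      have : OPT.filter (fun s => s ∈ ss g q) = ss g q := by
        rw [Finset.filter_mem_eq_inter]
        exact Finset.inter_eq_right.mpr (h_ss_sub g q)
      rw [this, Finset.sum_const, smul_eq_mul, mul_one]
    calc ∑ g : ↥J → Fin M, (ss g q).card
        = ∑ g : ↥J → Fin M, ∑ s ∈ OPT, if s ∈ ss g q then 1 else 0 :=
          Finset.sum_congr rfl (fun g _ => hcard g)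
      _ = ∑ s ∈ OPT, ∑ g : ↥J → Fin M, if s ∈ ss g q then 1 else 0 := Finset.sum_comm
      _ = ∑ s ∈ OPT, (Finset.univ.filter (fun g : ↥J → Fin M => s ∈ ss g q)).card :=
          Finset.sum_congr rfl (fun s _ => (Finset.card_filter _ _).symm)
  have h_KR : M * R ≤ (M - 1) * A := by
    have step1 : R ≤ ∑ q : Fin M, ∑ s ∈ OPT, ∑ j ∈ Bset OPT s,
        (Finset.univ.filter (fun g : ↥J → Fin M => s ∈ ss g q ∧ Gf g j = q)).card := by
      rw [hR, Finset.sum_comm]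
      refine le_trans (Finset.sum_le_sum (fun q _ => Finset.sum_le_sum (fun g _ => h_rej g q))) ?_
      refine le_of_eq (Finset.sum_congr rfl (fun q _ => ?_))
      calc ∑ g : ↥J → Fin M, ∑ s ∈ ss g q, ((Bset OPT s).filter (fun j => Gf g j = q)).card
          = ∑ g : ↥J → Fin M, ∑ s ∈ OPT,
              if s ∈ ss g q then ((Bset OPT s).filter (fun j => Gf g j = q)).card else 0 := by
            refine Finset.sum_congr rfl (fun g _ => ?_)
            rw [← Finset.sum_filter]
            have : OPT.filter (fun s => s ∈ ss g q) = ss g q := by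
              rw [Finset.filter_mem_eq_inter]
              exact Finset.inter_eq_right.mpr (h_ss_sub g q)
            rw [this]
        _ = ∑ g : ↥J → Fin M, ∑ s ∈ OPT, ∑ j ∈ Bset OPT s,
              (if s ∈ ss g q ∧ Gf g j = q then 1 else 0) := by
            refine Finset.sum_congr rfl (fun g _ => Finset.sum_congr rfl (fun s _ => ?_))
            rw [Finset.card_filter]
            by_cases h : s ∈ ss g q
            · simp only [h, if_true, true_and]
            · simp only [h, if_false, false_and, Finset.sum_const_zero]
        _ = ∑ s ∈ OPT, ∑ j ∈ Bset OPT s, ∑ g : ↥J → Fin M,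
              (if s ∈ ss g q ∧ Gf g j = q then 1 else 0) := by
            rw [Finset.sum_comm]
            exact Finset.sum_congr rfl (fun s _ => Finset.sum_comm)
        _ = ∑ s ∈ OPT, ∑ j ∈ Bset OPT s,
              (Finset.univ.filter (fun g : ↥J → Fin M => s ∈ ss g q ∧ Gf g j = q)).card :=
            Finset.sum_congr rfl (fun s _ => Finset.sum_congr rfl
              (fun j _ => (Finset.card_filter _ _).symm))
    have step2 : M * R ≤ ∑ q : Fin M, ∑ s ∈ OPT, (Bset OPT s).card *
        (Finset.univ.filter (fun g : ↥J → Fin M => s ∈ ss g q)).card := by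
      calc M * R ≤ M * ∑ q : Fin M, ∑ s ∈ OPT, ∑ j ∈ Bset OPT s,
            (Finset.univ.filter (fun g : ↥J → Fin M => s ∈ ss g q ∧ Gf g j = q)).card :=
            Nat.mul_le_mul_left M step1
        _ = ∑ q : Fin M, ∑ s ∈ OPT, ∑ j ∈ Bset OPT s, M *
            (Finset.univ.filter (fun g : ↥J → Fin M => s ∈ ss g q ∧ Gf g j = q)).card := by
            rw [Finset.mul_sum]
            exact Finset.sum_congr rfl (fun q _ => by
              rw [Finset.mul_sum]
              exact Finset.sum_congr rfl (fun s _ => Finset.mul_sum _ _ _))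
        _ = ∑ q : Fin M, ∑ s ∈ OPT, ∑ _j ∈ Bset OPT s,
            (Finset.univ.filter (fun g : ↥J → Fin M => s ∈ ss g q)).card := by
            refine Finset.sum_congr rfl (fun q _ => Finset.sum_congr rfl (fun s hs =>
              Finset.sum_congr rfl (fun j hj => h_count q s hs j hj)))
        _ = ∑ q : Fin M, ∑ s ∈ OPT, (Bset OPT s).card *
            (Finset.univ.filter (fun g : ↥J → Fin M => s ∈ ss g q)).card := by
            refine Finset.sum_congr rfl (fun q _ => Finset.sum_congr rfl (fun s _ => ?_))
            rw [Finset.sum_const, smul_eq_mul]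
    refine le_trans step2 ?_
    rw [hA', Finset.mul_sum]
    refine Finset.sum_le_sum (fun q _ => ?_)
    rw [Finset.mul_sum]
    refine Finset.sum_le_sum (fun s hs => ?_)
    exact Nat.mul_le_mul_right _ (h_B_card s hs)
  have h_main : M * (M ^ J.card * OPT.card) ≤ (2 * M - 1) * A := by
    have h1 : M * (M ^ J.card * OPT.card) ≤ M * A + M * R :=
      le_trans (Nat.mul_le_mul_left M h_total) (by ring_nf; omega)
    have h2 : M * A + M * R ≤ M * A + (M - 1) * A := by omega
    have h3 : M * A + (M - 1) * A = (2 * M - 1) * A := by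
      have : M + (M - 1) = 2 * M - 1 := by omega
      rw [← Nat.add_mul, this]
    omega
  -- transfer to the real goal
  set Smax : ℕ := ∑ g : ↥J → Fin M, ∑ q : Fin M,
    maxIS ((J.attach.filter (fun j => g j = q)).image Subtype.val) with hSmax
  have hAS : A ≤ Smax := by
    rw [hA, hSmax]
    exact Finset.sum_le_sum (fun g _ => Finset.sum_le_sum (fun q _ => h_maxIS g q))
  have hfin : M * (M ^ J.card * OPT.card) ≤ (2 * M - 1) * Smax :=
    le_trans h_main (Nat.mul_le_mul_left _ hAS)
  have h1M : (1:ℝ) ≤ (M:ℝ) := by exact_mod_cast hM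
  have hden1 : (0:ℝ) < 2 * (M:ℝ) - 1 := by linarith
  have hden2 : (0:ℝ) < (M:ℝ) ^ J.card := by positivity
  rw [div_le_div_iff₀ hden1 hden2]
  have hsum : (∑ g : ↥J → Fin M, ∑ p : Fin M,
      (maxIS ((J.attach.filter (fun j => g j = p)).image Subtype.val) : ℝ)) = (Smax : ℝ) := by
    rw [hSmax]
    push_cast
    rfl
  rw [hsum]
  have hcast : (M:ℝ) * ((M:ℝ) ^ J.card * (OPT.card:ℝ)) ≤ (2 * (M:ℝ) - 1) * (Smax:ℝ) := by
    have h := (Nat.cast_le (α := ℝ)).mpr hfin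
    have hge : 1 ≤ 2 * M := le_trans hM (Nat.le_mul_of_pos_left M two_pos)
    have h2 : ((2 * M - 1 : ℕ) : ℝ) = 2 * (M:ℝ) - 1 := by
      rw [Nat.cast_sub hge]
      push_cast
      ring
    rw [Nat.cast_mul (2 * M - 1) Smax, h2] at h
    push_cast at h
    linarith [h]
  calc (M:ℝ) * (OPT.card:ℝ) * (M:ℝ) ^ J.card
      = (M:ℝ) * ((M:ℝ) ^ J.card * (OPT.card:ℝ)) := by ring
    _ ≤ (2 * (M:ℝ) - 1) * (Smax:ℝ) := hcast
    _ = (Smax:ℝ) * (2 * (M:ℝ) - 1) := by ring
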